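/- Let α ∈ (0,1]. If D is a random variable on ℕ with P(D = 0) = 1 - α/2 and P(D = k) = α⁻¹ ∫₀^α (α - t) e^{-t} (1 - e^{-t})^{k-1} dt for k ≥ 1, then E[D] = (e^α - 1 - α)/α. -/

import Mathlib

open Real MeasureTheory

open intervalIntegral Filter

-- Aux: integration by parts
lemma aux_parts (α : ℝ) (hα0 : 0 < α) (k : ℕ) (hk1 : 1 ≤ k) :
    (∫ t in (0:ℝ)..α, (α - t) * Real.exp (-t) * (1 - Real.exp (-t)) ^ (k - 1))
      = (∫ t in (0:ℝ)..α, (1 - Real.exp (-t)) ^ k) / k := by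
  have hkR : (k:ℝ) ≠ 0 := Nat.cast_ne_zero.mpr (by omega)
  set F : ℝ → ℝ := fun t => (α - t) * (1 - Real.exp (-t)) ^ k / k with hF
  have hderiv : ∀ t : ℝ, HasDerivAt F
      ((α - t) * Real.exp (-t) * (1 - Real.exp (-t)) ^ (k - 1)
        - (1 - Real.exp (-t)) ^ k / k) t := by
    intro t
    have he : HasDerivAt (fun t : ℝ => Real.exp (-t)) (-Real.exp (-t)) t := by
      simpa using (hasDerivAt_neg t).exp
    have hx : HasDerivAt (fun t : ℝ => 1 - Real.exp (-t)) (Real.exp (-t)) t := by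
      simpa using he.const_sub 1
    have hxk : HasDerivAt (fun t : ℝ => (1 - Real.exp (-t)) ^ k)
        ((k:ℝ) * (1 - Real.exp (-t)) ^ (k - 1) * Real.exp (-t)) t := hx.pow k
    have hu : HasDerivAt (fun t : ℝ => α - t) (-1) t := by
      simpa using (hasDerivAt_id t).const_sub α
    have := (hu.mul hxk).div_const (k:ℝ)
    convert this using 1
    case e'_5 => rfl
    case e'_8 => rfl
    case e'_4 => rfl
    field_simp
    ring
  have hcont : Continuous fun t : ℝ =>
      (α - t) * Real.exp (-t) * (1 - Real.exp (-t)) ^ (k - 1)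
        - (1 - Real.exp (-t)) ^ k / k := by fun_prop
  have hint := intervalIntegral.integral_eq_sub_of_hasDerivAt
      (fun t _ => hderiv t) (hcont.intervalIntegrable 0 α)
  have hF0 : F 0 = 0 := by simp [hF, Real.exp_zero, zero_pow (by omega : k ≠ 0)]
  have hFα : F α = 0 := by simp [hF]
  rw [hFα, hF0, sub_zero] at hint
  have h1 : IntervalIntegrable (fun t : ℝ =>
      (α - t) * Real.exp (-t) * (1 - Real.exp (-t)) ^ (k - 1)) volume 0 α := by
    apply Continuous.intervalIntegrable; fun_prop
  have h2 : IntervalIntegrable (fun t : ℝ => (1 - Real.exp (-t)) ^ k / k) volume 0 α := by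
    apply Continuous.intervalIntegrable; fun_prop
  rw [intervalIntegral.integral_sub h1 h2] at hint
  rw [sub_eq_zero] at hint
  rw [hint, intervalIntegral.integral_div]


lemma aux_q_nonneg (α : ℝ) (hα0 : 0 < α) (k : ℕ) :
    0 ≤ ∫ t in (0:ℝ)..α, (1 - Real.exp (-t)) ^ k := by
  apply intervalIntegral.integral_nonneg hα0.le
  intro t ht
  have : Real.exp (-t) ≤ 1 := Real.exp_le_one_iff.mpr (by linarith [ht.1])
  exact pow_nonneg (by linarith) k

lemma aux_q_le (α : ℝ) (hα0 : 0 < α) (k : ℕ) :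
    (∫ t in (0:ℝ)..α, (1 - Real.exp (-t)) ^ k) ≤ (1 - Real.exp (-α)) ^ k * α := by
  have h := intervalIntegral.integral_mono_on (μ := volume) hα0.le
      ((by fun_prop : Continuous fun t : ℝ => (1 - Real.exp (-t)) ^ k).intervalIntegrable 0 α)
      (_root_.intervalIntegrable_const (c := (1 - Real.exp (-α)) ^ k))
      (fun t ht => by
        have h1 : Real.exp (-t) ≤ 1 := Real.exp_le_one_iff.mpr (by linarith [ht.1])
        have h2 : Real.exp (-α) ≤ Real.exp (-t) := Real.exp_le_exp.mpr (by linarith [ht.2])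
        exact pow_le_pow_left₀ (by linarith) (by linarith) k)
  rw [intervalIntegral.integral_const, sub_zero, smul_eq_mul] at h
  calc (∫ t in (0:ℝ)..α, (1 - Real.exp (-t)) ^ k) ≤ α * (1 - Real.exp (-α)) ^ k := h
    _ = (1 - Real.exp (-α)) ^ k * α := by ring

lemma aux_hasSum (α : ℝ) (hα0 : 0 < α) :
    HasSum (fun k : ℕ => ∫ t in (0:ℝ)..α, (1 - Real.exp (-t)) ^ (k + 1))
      (Real.exp α - 1 - α) := by
  set q : ℕ → ℝ := fun k => ∫ t in (0:ℝ)..α, (1 - Real.exp (-t)) ^ k with hq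
  have hqnn : ∀ k, 0 ≤ q k := fun k => aux_q_nonneg α hα0 k
  rw [hasSum_iff_tendsto_nat_of_nonneg (fun k => hqnn (k + 1))]
  have hpartial : ∀ n : ℕ, ∑ k ∈ Finset.range n, q (k + 1)
      = (Real.exp α - 1 - α)
        - ∫ t in (0:ℝ)..α, (Real.exp t - 1) * (1 - Real.exp (-t)) ^ n := by
    intro n
    have hsum : ∑ k ∈ Finset.range n, q (k + 1)
        = ∫ t in (0:ℝ)..α, ∑ k ∈ Finset.range n, (1 - Real.exp (-t)) ^ (k + 1) := by
      rw [intervalIntegral.integral_finset_sum]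
      intro i _
      exact (by fun_prop : Continuous fun t : ℝ =>
        (1 - Real.exp (-t)) ^ (i + 1)).intervalIntegrable 0 α
    have hpt : ∀ t : ℝ, ∑ k ∈ Finset.range n, (1 - Real.exp (-t)) ^ (k + 1)
        = (Real.exp t - 1) - (Real.exp t - 1) * (1 - Real.exp (-t)) ^ n := by
      intro t
      have hx1 : (1 - Real.exp (-t)) ≠ 1 := by
        have := Real.exp_pos (-t); intro h; nlinarith
      have hgeom := geom_sum_eq hx1 n
      have hxe : (1 - Real.exp (-t)) * Real.exp t = Real.exp t - 1 := by
        rw [sub_mul, one_mul, ← Real.exp_add]; simp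
      have h1e : (Real.exp (-t))⁻¹ = Real.exp t := by
        rw [← Real.exp_neg]; simp
      have he : (1 - Real.exp (-t)) - 1 = -Real.exp (-t) := by ring
      calc ∑ k ∈ Finset.range n, (1 - Real.exp (-t)) ^ (k + 1)
          = (1 - Real.exp (-t)) * ∑ k ∈ Finset.range n, (1 - Real.exp (-t)) ^ k := by
            rw [Finset.mul_sum]; exact Finset.sum_congr rfl fun k _ => by ring
        _ = (1 - Real.exp (-t)) * (((1 - Real.exp (-t)) ^ n - 1) / ((1 - Real.exp (-t)) - 1)) := by
            rw [hgeom]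
        _ = (Real.exp t - 1) - (Real.exp t - 1) * (1 - Real.exp (-t)) ^ n := by
            rw [he, div_neg, div_eq_mul_inv, h1e]
            linear_combination (1 - (1 - Real.exp (-t)) ^ n) * hxe
    have hsplit : (∫ t in (0:ℝ)..α,
          ((Real.exp t - 1) - (Real.exp t - 1) * (1 - Real.exp (-t)) ^ n))
        = (∫ t in (0:ℝ)..α, (Real.exp t - 1))
          - ∫ t in (0:ℝ)..α, (Real.exp t - 1) * (1 - Real.exp (-t)) ^ n := by
      apply intervalIntegral.integral_sub
      · exact (by fun_prop : Continuous fun t : ℝ => Real.exp t - 1).intervalIntegrable 0 α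
      · exact (by fun_prop : Continuous fun t : ℝ =>
          (Real.exp t - 1) * (1 - Real.exp (-t)) ^ n).intervalIntegrable 0 α
    have hI : (∫ t in (0:ℝ)..α, (Real.exp t - 1)) = Real.exp α - 1 - α := by
      rw [intervalIntegral.integral_sub
        ((Real.continuous_exp).intervalIntegrable 0 α)
        (_root_.intervalIntegrable_const (c := (1:ℝ))),
        integral_exp, intervalIntegral.integral_const]
      simp [Real.exp_zero]
    have hfun : (fun t => ∑ k ∈ Finset.range n, (1 - Real.exp (-t)) ^ (k + 1))
        = fun t => (Real.exp t - 1) - (Real.exp t - 1) * (1 - Real.exp (-t)) ^ n :=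
      funext hpt
    rw [hsum, hfun, hsplit, hI]
  simp only [hpartial]
  have hrem : Filter.Tendsto
      (fun n : ℕ => ∫ t in (0:ℝ)..α, (Real.exp t - 1) * (1 - Real.exp (-t)) ^ n)
      Filter.atTop (nhds 0) := by
    have hr0 : (0:ℝ) ≤ 1 - Real.exp (-α) := by
      have : Real.exp (-α) ≤ 1 := Real.exp_le_one_iff.mpr (by linarith)
      linarith
    have hr1 : 1 - Real.exp (-α) < 1 := by have := Real.exp_pos (-α); linarith
    have heα : (0:ℝ) ≤ Real.exp α - 1 := by linarith [Real.one_le_exp hα0.le]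
    have hbound : ∀ n : ℕ,
        ‖∫ t in (0:ℝ)..α, (Real.exp t - 1) * (1 - Real.exp (-t)) ^ n‖
          ≤ ((Real.exp α - 1) * α) * (1 - Real.exp (-α)) ^ n := by
      intro n
      have hnn : 0 ≤ ∫ t in (0:ℝ)..α, (Real.exp t - 1) * (1 - Real.exp (-t)) ^ n := by
        apply intervalIntegral.integral_nonneg hα0.le
        intro t ht
        have h1 : Real.exp (-t) ≤ 1 := Real.exp_le_one_iff.mpr (by linarith [ht.1])
        have h2 : 1 ≤ Real.exp t := Real.one_le_exp ht.1
        exact mul_nonneg (by linarith) (pow_nonneg (by linarith) n)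
      rw [Real.norm_eq_abs, abs_of_nonneg hnn]
      have h := intervalIntegral.integral_mono_on (μ := volume) hα0.le
        ((by fun_prop : Continuous fun t : ℝ =>
          (Real.exp t - 1) * (1 - Real.exp (-t)) ^ n).intervalIntegrable 0 α)
        (_root_.intervalIntegrable_const (c := (Real.exp α - 1) * (1 - Real.exp (-α)) ^ n))
        (fun t ht => by
          have h1 : Real.exp (-t) ≤ 1 := Real.exp_le_one_iff.mpr (by linarith [ht.1])
          have h2 : Real.exp (-α) ≤ Real.exp (-t) := Real.exp_le_exp.mpr (by linarith [ht.2])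
          have h3 : Real.exp t ≤ Real.exp α := Real.exp_le_exp.mpr ht.2
          have h4 : 1 ≤ Real.exp t := Real.one_le_exp ht.1
          have h5 : (1 - Real.exp (-t)) ^ n ≤ (1 - Real.exp (-α)) ^ n :=
            pow_le_pow_left₀ (by linarith) (by linarith) n
          calc (Real.exp t - 1) * (1 - Real.exp (-t)) ^ n
              ≤ (Real.exp α - 1) * (1 - Real.exp (-t)) ^ n :=
                mul_le_mul_of_nonneg_right (by linarith)
                  (pow_nonneg (by linarith) n)
            _ ≤ (Real.exp α - 1) * (1 - Real.exp (-α)) ^ n :=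
                mul_le_mul_of_nonneg_left h5 heα)
      rw [intervalIntegral.integral_const, sub_zero, smul_eq_mul] at h
      calc (∫ t in (0:ℝ)..α, (Real.exp t - 1) * (1 - Real.exp (-t)) ^ n)
          ≤ α * ((Real.exp α - 1) * (1 - Real.exp (-α)) ^ n) := h
        _ = ((Real.exp α - 1) * α) * (1 - Real.exp (-α)) ^ n := by ring
    have hgeo : Filter.Tendsto
        (fun n : ℕ => ((Real.exp α - 1) * α) * (1 - Real.exp (-α)) ^ n)
        Filter.atTop (nhds 0) := by
      rw [show (0:ℝ) = ((Real.exp α - 1) * α) * 0 by ring]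
      exact (tendsto_pow_atTop_nhds_zero_of_lt_one hr0 hr1).const_mul _
    exact squeeze_zero_norm hbound hgeo
  have hfin := (tendsto_const_nhds
      (x := Real.exp α - 1 - α) (f := Filter.atTop (α := ℕ))).sub hrem
  simpa using hfin


/-- The mean of the limiting displacement `D_α^E` for early-insertion coalesced
hashing: `E[D] = (e^α - 1 - α)/α`. -/
theorem stmt_5 (α : ℝ) (hα : α ∈ Set.Ioc (0:ℝ) 1)
    (μ : Measure ℕ) [IsProbabilityMeasure μ]
    (h0 : (μ {0}).toReal = 1 - α / 2)
    (hk : ∀ k : ℕ, 1 ≤ k →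
      (μ {k}).toReal = α⁻¹ * ∫ t in (0:ℝ)..α,
        (α - t) * Real.exp (-t) * (1 - Real.exp (-t)) ^ (k - 1)) :
    ∫ k, (k : ℝ) ∂μ = (Real.exp α - 1 - α) / α := by
  obtain ⟨hα0, hα1⟩ := hα
  set g : ℕ → ℝ := fun k => (μ {k}).toReal * k with hg
  have hg0 : g 0 = 0 := by simp [hg]
  have hgk : ∀ k : ℕ, g (k + 1)
      = α⁻¹ * ∫ t in (0:ℝ)..α, (1 - Real.exp (-t)) ^ (k + 1) := by
    intro k
    have h := hk (k + 1) (by omega)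
    have hp := aux_parts α hα0 (k + 1) (by omega)
    have hc : ((k:ℝ) + 1) ≠ 0 := by positivity
    simp only [hg, h, hp]
    push_cast
    field_simp
  have hgsum : HasSum g (α⁻¹ * (Real.exp α - 1 - α)) := by
    have h1 : HasSum (fun k : ℕ => g (k + 1)) (α⁻¹ * (Real.exp α - 1 - α)) := by
      have := (aux_hasSum α hα0).mul_left α⁻¹
      simpa [hgk] using this
    have h2 := (hasSum_nat_add_iff (f := g) 1).mp h1
    simpa [hg0] using h2
  have hgnn : ∀ k, 0 ≤ g k := fun k =>
    mul_nonneg ENNReal.toReal_nonneg (Nat.cast_nonneg k)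
  have hterm : ∀ k : ℕ, (‖(k:ℝ)‖₊ : ENNReal) * μ {k} = ENNReal.ofReal (g k) := by
    intro k
    rw [← enorm_eq_nnnorm, Real.enorm_eq_ofReal (Nat.cast_nonneg k), hg]
    rw [ENNReal.ofReal_mul ENNReal.toReal_nonneg,
      ENNReal.ofReal_toReal (measure_ne_top μ _), mul_comm]
  have hint : Integrable (fun k : ℕ => (k:ℝ)) μ := by
    refine ⟨(measurable_from_top).aestronglyMeasurable, ?_⟩
    have hl : (∫⁻ k, (‖(k:ℝ)‖₊ : ENNReal) ∂μ) < ⊤ := by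
      rw [lintegral_countable' (fun k : ℕ => ((‖(k:ℝ)‖₊ : ENNReal)))]
      calc ∑' k : ℕ, (‖(k:ℝ)‖₊ : ENNReal) * μ {k}
          = ∑' k : ℕ, ENNReal.ofReal (g k) := tsum_congr hterm
        _ = ENNReal.ofReal (∑' k, g k) :=
            (ENNReal.ofReal_tsum_of_nonneg hgnn hgsum.summable).symm
        _ < ⊤ := ENNReal.ofReal_lt_top
    exact hl
  rw [integral_countable' hint]
  have : ∀ k : ℕ, (μ {k}).toReal • (k:ℝ) = g k := fun k => by simp [hg, smul_eq_mul]
  simp only [measureReal_def]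
  rw [tsum_congr this, hgsum.tsum_eq, inv_mul_eq_div]
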